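/- Let μ be a probability measure on ℝ and g: ℝ → ℝ a non-decreasing function. Then the quantile function of the pushforward measure g#μ equals g composed with the quantile function of μ, Lebesgue-almost-everywhere on (0,1): F_{g#μ}⁻(p) = g(F_μ⁻(p)) for a.e. p ∈ (0,1). -/

import Mathlib

open Set MeasureTheory

/-- The quantile function (right-inverse of the cumulative distribution function)
of a measure ρ on ℝ. -/
noncomputable def quantileFn (ρ : MeasureTheory.Measure ℝ) (p : ℝ) : ℝ :=
  sInf {x : ℝ | p ≤ (ρ (Set.Iic x)).toReal}

open ProbabilityTheory Filter Topology

lemma quantileFn_eq_cdf (ρ : MeasureTheory.Measure ℝ) [IsProbabilityMeasure ρ] (p : ℝ) :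
    quantileFn ρ p = sInf {x : ℝ | p ≤ cdf ρ x} := by
  unfold quantileFn
  congr 1
  ext x
  simp [cdf_eq_real, measureReal_def]

lemma nonempty_quantile_set (ρ : MeasureTheory.Measure ℝ) [IsProbabilityMeasure ρ] {p : ℝ}
    (hp : p < 1) : {x : ℝ | p ≤ cdf ρ x}.Nonempty :=
  ((tendsto_cdf_atTop ρ).eventually (eventually_ge_nhds hp)).exists

lemma bddBelow_quantile_set (ρ : MeasureTheory.Measure ℝ) [IsProbabilityMeasure ρ] {p : ℝ}
    (hp : 0 < p) : BddBelow {x : ℝ | p ≤ cdf ρ x} := by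
  obtain ⟨x₀, hx₀⟩ := ((tendsto_cdf_atBot ρ).eventually (eventually_lt_nhds hp)).exists
  refine ⟨x₀, fun x hx => ?_⟩
  by_contra hcon
  push_neg at hcon
  exact absurd (le_trans hx (monotone_cdf ρ hcon.le)) (not_le.2 hx₀)

lemma le_cdf_quantileFn (ρ : MeasureTheory.Measure ℝ) [IsProbabilityMeasure ρ] {p : ℝ}
    (hp0 : 0 < p) (hp1 : p < 1) : p ≤ cdf ρ (quantileFn ρ p) := by
  rw [quantileFn_eq_cdf]
  set S := {x : ℝ | p ≤ cdf ρ x} with hS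
  have hne := nonempty_quantile_set ρ hp1
  have hright : Filter.Tendsto (cdf ρ) (𝓝[>] (sInf S)) (𝓝 (cdf ρ (sInf S))) :=
    ((cdf ρ).right_continuous (sInf S)).mono_left (nhdsWithin_mono _ Ioi_subset_Ici_self)
  refine ge_of_tendsto hright ?_
  filter_upwards [self_mem_nhdsWithin] with x hx
  obtain ⟨y, hyS, hyx⟩ := exists_lt_of_csInf_lt hne hx
  exact le_trans hyS (monotone_cdf ρ hyx.le)

lemma quantileFn_le (ρ : MeasureTheory.Measure ℝ) [IsProbabilityMeasure ρ] {p x : ℝ}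
    (hp0 : 0 < p) (h : p ≤ cdf ρ x) : quantileFn ρ p ≤ x := by
  rw [quantileFn_eq_cdf]
  exact csInf_le (bddBelow_quantile_set ρ hp0) h

lemma quantileFn_mono (ρ : MeasureTheory.Measure ℝ) [IsProbabilityMeasure ρ] {p p' : ℝ}
    (hp0 : 0 < p) (hpp' : p ≤ p') (hp'1 : p' < 1) : quantileFn ρ p ≤ quantileFn ρ p' := by
  rw [quantileFn_eq_cdf, quantileFn_eq_cdf]
  exact csInf_le_csInf (bddBelow_quantile_set ρ hp0) (nonempty_quantile_set ρ hp'1)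
    (fun x hx => le_trans hpp' hx)

section Main

variable (μ : MeasureTheory.Measure ℝ) [IsProbabilityMeasure μ] {g : ℝ → ℝ} (hg : Monotone g)

include hg

/-- Step 1: upper bound. -/
lemma quantile_push_le {p : ℝ} (hp0 : 0 < p) (hp1 : p < 1) :
    quantileFn (Measure.map g μ) p ≤ g (quantileFn μ p) := by
  haveI : IsProbabilityMeasure (Measure.map g μ) :=
    Measure.isProbabilityMeasure_map hg.measurable.aemeasurable
  refine quantileFn_le _ hp0 ?_
  have hmap : (Measure.map g μ) (Iic (g (quantileFn μ p))) = μ (g ⁻¹' Iic (g (quantileFn μ p))) :=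
    Measure.map_apply hg.measurable measurableSet_Iic
  have hsub : Iic (quantileFn μ p) ⊆ g ⁻¹' Iic (g (quantileFn μ p)) := fun x hx => hg hx
  calc p ≤ cdf μ (quantileFn μ p) := le_cdf_quantileFn μ hp0 hp1
    _ = (μ (Iic (quantileFn μ p))).toReal := by rw [cdf_eq_real, measureReal_def]
    _ ≤ (μ (g ⁻¹' Iic (g (quantileFn μ p)))).toReal :=
        ENNReal.toReal_mono (measure_ne_top μ _) (measure_mono hsub)
    _ = cdf (Measure.map g μ) (g (quantileFn μ p)) := by rw [cdf_eq_real, measureReal_def, hmap]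

/-- Step 2: lower bound at strictly smaller parameters. -/
lemma quantile_push_ge {p' p : ℝ} (hp'0 : 0 < p') (hp'p : p' < p) (hp1 : p < 1) :
    g (quantileFn μ p') ≤ quantileFn (Measure.map g μ) p := by
  haveI : IsProbabilityMeasure (Measure.map g μ) :=
    Measure.isProbabilityMeasure_map hg.measurable.aemeasurable
  set Q := quantileFn (Measure.map g μ) p with hQdef
  have hp0 : 0 < p := hp'0.trans hp'p
  have hQ : p ≤ cdf (Measure.map g μ) Q := le_cdf_quantileFn _ hp0 hp1
  set S := g ⁻¹' Iic Q with hSdef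
  have hSmeas : (Measure.map g μ) (Iic Q) = μ S :=
    Measure.map_apply hg.measurable measurableSet_Iic
  have hcdfS : p ≤ (μ S).toReal := by rwa [cdf_eq_real, measureReal_def, hSmeas] at hQ
  have hlower : ∀ x y : ℝ, y ≤ x → x ∈ S → y ∈ S :=
    fun x y hyx hx => le_trans (hg hyx) hx
  have claim : ∃ x, x ∈ S ∧ p' ≤ cdf μ x := by
    by_contra hcon
    push_neg at hcon
    have hbound : ∀ x ∈ S, μ (Iic x) ≤ ENNReal.ofReal p' := by
      intro x hx
      rw [← ofReal_cdf μ x]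
      exact ENNReal.ofReal_le_ofReal (hcon x hx).le
    have hμS : μ S ≤ ENNReal.ofReal p' := by
      rcases S.eq_empty_or_nonempty with hS | hSne
      · simp [hS]
      by_cases hbdd : BddAbove S
      · set b := sSup S with hb
        by_cases hbS : b ∈ S
        · exact le_trans (measure_mono (fun x hx => le_csSup hbdd hx)) (hbound b hbS)
        · have hSeq : S = Iio b := by
            apply Subset.antisymm
            · intro x hx
              rcases lt_or_eq_of_le (le_csSup hbdd hx) with h | h
              · exact h
              · exact absurd (h ▸ hx : sSup S ∈ S) hbS
            · intro y hy
              obtain ⟨x, hxS, hyx⟩ := exists_lt_of_lt_csSup hSne hy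
              exact hlower x y hyx.le hxS
          set u : ℕ → ℝ := fun n => b - 1/(n+1) with hu
          have humono : Monotone u := by
            intro m n hmn
            simp only [hu]
            have h1 : (1:ℝ)/(n+1) ≤ 1/(m+1) := by
              apply one_div_le_one_div_of_le
              · positivity
              · have := (Nat.cast_le (α := ℝ)).2 hmn; linarith
            linarith
          have hulb : ∀ n : ℕ, u n < b := by
            intro n
            simp only [hu]
            have : (0:ℝ) < 1/((n:ℝ)+1) := by positivity
            linarith
          have hUnion : Iio b = ⋃ n : ℕ, Iic (u n) := by
            ext y
            simp only [mem_Iio, mem_iUnion, mem_Iic]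
            constructor
            · intro hy
              obtain ⟨n, hn⟩ := exists_nat_one_div_lt (sub_pos.2 hy)
              exact ⟨n, by simp only [hu]; linarith⟩
            · rintro ⟨n, hn⟩
              exact lt_of_le_of_lt hn (hulb n)
          have hdir : Directed (· ⊆ ·) (fun n : ℕ => Iic (u n)) := by
            intro m n
            exact ⟨max m n, Iic_subset_Iic.2 (humono (le_max_left m n)),
              Iic_subset_Iic.2 (humono (le_max_right m n))⟩
          rw [hSeq, hUnion, hdir.measure_iUnion]
          apply iSup_le
          intro n
          apply hbound
          rw [hSeq]
          exact hulb n
      · exfalso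
        have hSuniv : ∀ y : ℝ, y ∈ S := by
          intro y
          obtain ⟨x, hxS, hyx⟩ := not_bddAbove_iff.mp hbdd y
          exact hlower x y hyx.le hxS
        obtain ⟨y, hy⟩ := ((tendsto_cdf_atTop μ).eventually
          (eventually_ge_nhds (show p' < 1 from hp'p.trans hp1))).exists
        exact absurd hy (not_le.2 (hcon y (hSuniv y)))
    have hle : (μ S).toReal ≤ p' := by
      have h := ENNReal.toReal_mono ENNReal.ofReal_ne_top hμS
      rwa [ENNReal.toReal_ofReal hp'0.le] at h
    linarith
  obtain ⟨x, hxS, hpx⟩ := claim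
  calc g (quantileFn μ p') ≤ g x := hg (quantileFn_le μ hp'0 hpx)
    _ ≤ Q := hxS

/-- On any interval `(a,b) ⊂ (0,1)`, the set of bad points is countable. -/
lemma quantile_push_bad_countable {a b : ℝ} (ha : 0 < a) (hb : b < 1) :
    Set.Countable {p ∈ Ioo a b |
      quantileFn (Measure.map g μ) p ≠ g (quantileFn μ p)} := by
  rcases le_or_gt b a with hba | hab
  · have : Ioo a b = ∅ := Ioo_eq_empty (not_lt.2 hba)
    simp [this]
  -- clamp function
  set c : ℝ → ℝ := fun p => min (max p a) b with hc
  have hcmem : ∀ p, c p ∈ Icc a b := by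
    intro p
    constructor
    · exact le_min (le_max_right p a) hab.le
    · exact min_le_right _ _
  have hcmono : Monotone c := fun p q hpq =>
    min_le_min (max_le_max hpq le_rfl) le_rfl
  have hcid : ∀ p ∈ Ioo a b, c p = p := by
    intro p hp
    simp only [hc]
    rw [max_eq_left hp.1.le, min_eq_left hp.2.le]
  set H : ℝ → ℝ := fun p => g (quantileFn μ (c p)) with hH
  have hHmono : Monotone H := by
    intro p q hpq
    apply hg
    exact quantileFn_mono μ (lt_of_lt_of_le ha (hcmem p).1) (hcmono hpq)
      (lt_of_le_of_lt (hcmem q).2 hb)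
  have hcount := hHmono.countable_not_continuousAt
  apply Set.Countable.mono ?_ hcount
  intro p hp
  obtain ⟨hpIoo, hpne⟩ := hp
  simp only [mem_setOf_eq]
  intro hcontH
  apply hpne
  have hp0 : 0 < p := ha.trans hpIoo.1
  have hp1 : p < 1 := hpIoo.2.trans hb
  apply le_antisymm (quantile_push_le μ hg hp0 hp1)
  -- lower bound via left limit
  have htend : Filter.Tendsto H (𝓝[<] p) (𝓝 (H p)) :=
    (hcontH.continuousWithinAt).tendsto
  have hHp : H p = g (quantileFn μ p) := by
    simp only [hH, hcid p hpIoo]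
  rw [← hHp]
  refine le_of_tendsto htend ?_
  filter_upwards [Ioo_mem_nhdsLT hpIoo.1] with p' hp'
  have hcp' : c p' = p' := hcid p' ⟨hp'.1, hp'.2.trans hpIoo.2⟩
  simp only [hH, hcp']
  exact quantile_push_ge μ hg (ha.trans hp'.1) hp'.2 hp1

end Main

/-- For a probability measure μ on ℝ and a non-decreasing g : ℝ → ℝ, the quantile
function of the pushforward g#μ equals g composed with the quantile function of μ,
Lebesgue-a.e. on (0,1). -/
theorem quantile_pushforward_monotone (μ : MeasureTheory.Measure ℝ)
    [IsProbabilityMeasure μ] (g : ℝ → ℝ) (hg : Monotone g) :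
    ∀ᵐ p ∂(volume.restrict (Set.Ioo (0:ℝ) 1)),
      quantileFn (Measure.map g μ) p = g (quantileFn μ p) := by
  set Bad : Set ℝ := {p ∈ Ioo (0:ℝ) 1 |
    quantileFn (Measure.map g μ) p ≠ g (quantileFn μ p)} with hBad
  have hcover : Bad ⊆ ⋃ n : ℕ, {p ∈ Ioo (1/(n+2) : ℝ) (1 - 1/(n+2)) |
      quantileFn (Measure.map g μ) p ≠ g (quantileFn μ p)} := by
    rintro p ⟨hp, hne⟩
    have h1 : 0 < min p (1 - p) := lt_min hp.1 (by linarith [hp.2])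
    obtain ⟨n, hn⟩ := exists_nat_one_div_lt h1
    refine mem_iUnion.2 ⟨n + 1, ⟨⟨?_, ?_⟩, hne⟩⟩
    · have h2 : (1:ℝ)/(↑(n+1)+2) ≤ 1/(↑n+1) := by
        apply one_div_le_one_div_of_le
        · positivity
        · push_cast; linarith
      calc (1:ℝ)/(↑(n+1)+2) ≤ 1/(↑n+1) := h2
        _ < min p (1-p) := hn
        _ ≤ p := min_le_left _ _
    · have h2 : (1:ℝ)/(↑(n+1)+2) ≤ 1/(↑n+1) := by
        apply one_div_le_one_div_of_le
        · positivity
        · push_cast; linarith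
      have h3 : (1:ℝ)/(↑n+1) < 1 - p := lt_of_lt_of_le hn (min_le_right _ _)
      linarith
  have hcount : Set.Countable Bad := by
    apply Set.Countable.mono hcover
    apply Set.countable_iUnion
    intro n
    apply quantile_push_bad_countable μ hg
    · positivity
    · have : (0:ℝ) < 1/((n:ℝ)+2) := by positivity
      linarith
  rw [ae_restrict_iff' measurableSet_Ioo]
  have hz : volume Bad = 0 := hcount.measure_zero _
  filter_upwards [measure_eq_zero_iff_ae_notMem.mp hz] with p hp hmem
  by_contra hne
  exact hp ⟨hmem, hne⟩
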